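/- Let n = v ⊕ z be a 2-step nilpotent Lie algebra with inner product, z̃ ⊆ z a subspace with orthogonal projection π : z → z̃, and ñ = v ⊕ z̃ the Lie algebra with bracket [V+Z, V'+Z']_ñ = π([V,V']_n). If n is of H-type (respectively non-singular), then ñ is of H-type (respectively non-singular). -/

import Mathlib

open RealInnerProductSpace

/-- Let `n = v ⊕ z` be 2-step nilpotent, `z̃ ⊆ z` a subspace with
orthogonal projection `π`, and `ñ = v ⊕ z̃` the Lie algebra with projected
bracket. If `n` is of H-type (resp. non-singular) then so is `ñ`. -/
theorem stmt_11 {n : Type*} [NormedAddCommGroup n] [InnerProductSpace ℝ n]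
    [FiniteDimensional ℝ n]
    (B : n →ₗ[ℝ] n →ₗ[ℝ] n)
    (hanti : ∀ X Y, B X Y = - B Y X)
    (h2step : ∀ X Y W, B (B X Y) W = 0)
    (z : Submodule ℝ n) (hz : ∀ X, X ∈ z ↔ ∀ Y, B X Y = 0)
    (zt : Submodule ℝ n) (hzt : zt ≤ z)
    (j : n → n →ₗ[ℝ] n)
    (hj : ∀ Z ∈ z, ∀ X Y : n, ⟪j Z X, Y⟫ = ⟪Z, B X Y⟫)
    (jt : n → n →ₗ[ℝ] n)
    (hjt : ∀ Z ∈ zt, ∀ X Y : n,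
      ⟪jt Z X, Y⟫ = ⟪Z, (Submodule.orthogonalProjectionOnto zt (B X Y) : n)⟫) :
    ((∀ Z ∈ z, ∀ V ∈ zᗮ, j Z (j Z V) = - (‖Z‖ ^ 2 • V)) →
      ∀ Z ∈ zt, ∀ V ∈ zᗮ, jt Z (jt Z V) = - (‖Z‖ ^ 2 • V)) ∧
    ((∀ Z ∈ z, Z ≠ 0 →
        (∀ V ∈ zᗮ, j Z V = 0 → V = 0) ∧ (∀ W ∈ zᗮ, ∃ V ∈ zᗮ, j Z V = W)) →
      ∀ Z ∈ zt, Z ≠ 0 →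
        (∀ V ∈ zᗮ, jt Z V = 0 → V = 0) ∧ (∀ W ∈ zᗮ, ∃ V ∈ zᗮ, jt Z V = W)) := by
  -- Key: for Z ∈ zt, jt Z = j Z.
  have key : ∀ Z ∈ zt, jt Z = j Z := by
    intro Z hZ
    ext X
    apply ext_inner_right ℝ
    intro Y
    rw [hjt Z hZ X Y, hj Z (hzt hZ) X Y]
    exact Submodule.inner_orthogonalProjectionOnto_eq_of_mem_left (K := zt) ⟨Z, hZ⟩ (B X Y)
  constructor
  · intro H Z hZ V hV
    rw [key Z hZ]
    exact H Z (hzt hZ) V hV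
  · intro H Z hZ hZ0
    rw [key Z hZ]
    exact H Z (hzt hZ) hZ0
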